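/- In the bead-reversal setting on G, if a bead configuration satisfies σ(κ) < ρ(κ) for every simple cycle κ of G, then the orientation of G induced by the configuration is acyclic. Equivalently, if the induced orientation contains a directed cycle along a simple cycle κ, then σ(κ) ≥ ρ(κ). -/

import Mathlib

variable {V : Type*}

attribute [local instance] Classical.propDecidable

/-- `a` is a bead configuration on `G` (with bead numbers `r`): `a u v` is the number
of beads at `u`'s end of the edge `{u, v}`; each edge `{u, v}` carries
`e_uv = r u + r v − gcd (r u) (r v)` beads in total, and every bead count is a
multiple of `gcd (r u) (r v)`. -/
def IsBeadConfig (G : SimpleGraph V) (r : V → ℕ) (a : V → V → ℕ) : Prop :=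
  ∀ u v, G.Adj u v →
    a u v + a v u = r u + r v - Nat.gcd (r u) (r v) ∧ Nat.gcd (r u) (r v) ∣ a u v

/-- A vertex `v` is enabled when every edge incident to `v` carries at least `r v`
beads at `v`'s end. -/
def Enabled (G : SimpleGraph V) (r : V → ℕ) (a : V → V → ℕ) (v : V) : Prop :=
  ∀ u, G.Adj v u → r v ≤ a v u

/-- The bead-reversal step at vertex `v`: `r v` beads are moved from `v`'s end to the
opposite end of every edge incident to `v`. -/
noncomputable def beadStep (G : SimpleGraph V) (r : V → ℕ) (a : V → V → ℕ) (v : V) :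
    V → V → ℕ :=
  fun x y =>
    if x = v ∧ G.Adj v y then a x y - r v
    else if y = v ∧ G.Adj v x then a x y + r v
    else a x y

/-- `σ⁺(κ)`: the sum, over the edges of the cycle `κ` traversed as `u → v` along the
traversal direction of `κ`, of the number of beads at `v`'s end. -/
def sigmaPlus {G : SimpleGraph V} {w : V} (a : V → V → ℕ) (κ : G.Walk w w) : ℕ :=
  (κ.darts.map (fun d => a d.toProd.2 d.toProd.1)).sum

/-- `σ⁻(κ)`: the sum, over the edges of the cycle `κ` traversed as `u → v` along the
traversal direction opposite to that of `κ`, of the number of beads at `u`'s end. -/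
def sigmaMinus {G : SimpleGraph V} {w : V} (a : V → V → ℕ) (κ : G.Walk w w) : ℕ :=
  (κ.darts.map (fun d => a d.toProd.1 d.toProd.2)).sum

/-- `ρ(κ)`: the sum of `r v` over the vertices `v` of the cycle `κ`. -/
def rho {G : SimpleGraph V} {w : V} (r : V → ℕ) (κ : G.Walk w w) : ℕ :=
  (κ.support.tail.map r).sum

/-- The orientation of `G` induced by a bead configuration: the edge `{u, v}` is
directed `u → v` exactly when there are at least `r v` beads at `v`'s end. -/
def inducedOrientation (G : SimpleGraph V) (r : V → ℕ) (a : V → V → ℕ) :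
    V → V → Prop :=
  fun u v => G.Adj u v ∧ r v ≤ a v u

/-- Auxiliary: an edge cannot be oriented both ways. -/
private lemma bead_two_way_contra {G : SimpleGraph V} {r : V → ℕ} {a : V → V → ℕ}
    (hr : ∀ v, 0 < r v) (hconf : IsBeadConfig G r a) {u y : V} (h : G.Adj u y)
    (h1 : r y ≤ a y u) (h2 : r u ≤ a u y) : False := by
  obtain ⟨hsum, -⟩ := hconf u y h
  have hg : 0 < Nat.gcd (r u) (r y) := Nat.gcd_pos_of_pos_left _ (hr u)
  have hle : Nat.gcd (r u) (r y) ≤ r u := Nat.le_of_dvd (hr u) (Nat.gcd_dvd_left _ _)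
  omega

/-- Auxiliary: no closed walk of positive length all of whose darts are oriented
along the induced orientation. -/
private lemma no_oriented_closed_walk {G : SimpleGraph V}
    {r : V → ℕ} (hr : ∀ v, 0 < r v)
    {a : V → V → ℕ} (hconf : IsBeadConfig G r a)
    (hσ : ∀ (w : V) (κ : G.Walk w w), κ.IsCycle →
      max (sigmaPlus a κ) (sigmaMinus a κ) < rho r κ) :
    ∀ (n : ℕ) ⦃u : V⦄ (p : G.Walk u u), p.length = n → 0 < p.length →
      (∀ d ∈ p.darts, r d.toProd.2 ≤ a d.toProd.2 d.toProd.1) → False := by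
  intro n
  induction n using Nat.strong_induction_on with
  | _ n ih =>
    intro u p hlen hpos hor
    cases p with
    | nil => simp at hpos
    | @cons _ y _ h q =>
      by_cases hnd : q.support.Nodup
      · -- the tail is a path; decide whether the first edge reappears in it
        by_cases hedge : s(u, y) ∈ q.edges
        · -- the edge `{u,y}` appears in `q`; find the dart carrying it
          rw [SimpleGraph.Walk.edges, List.mem_map] at hedge
          obtain ⟨d, hd, hde⟩ := hedge
          have hde' : d.toProd = (u, y) ∨ d.toProd = (y, u) := by
            have := hde
            rw [SimpleGraph.Dart.edge] at this
            simpa [Sym2.eq_iff, Prod.ext_iff] using this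
          rcases hde' with hde' | hde'
          · -- dart `(u, y)` in `q`: impossible since `u` is last in the path `q`
            have hmem : u ∈ q.darts.map (·.toProd.1) :=
              List.mem_map.mpr ⟨d, hd, by rw [hde']⟩
            rw [SimpleGraph.Walk.map_fst_darts] at hmem
            have hspec : q.support.dropLast ++ [u] = q.support := by
              have := List.dropLast_append_getLast (q.support_ne_nil)
              rwa [q.getLast_support] at this
            have hnd' := hnd
            rw [← hspec, List.nodup_append] at hnd'
            exact hnd'.2.2 u hmem u (by simp) rfl
          · -- dart `(y, u)` in `q`: the edge is oriented both ways
            have horq : r d.toProd.2 ≤ a d.toProd.2 d.toProd.1 :=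
              hor d (by simp [hd])
            rw [hde'] at horq
            have hor1 : r y ≤ a y u := by
              have := hor ⟨(u, y), h⟩ (by simp)
              simpa using this
            exact bead_two_way_contra hr hconf h hor1 horq
        · -- `cons h q` is a genuine cycle: contradict `hσ`
          have hcyc : (SimpleGraph.Walk.cons h q).IsCycle :=
            (SimpleGraph.Walk.cons_isCycle_iff q h).mpr
              ⟨(SimpleGraph.Walk.isPath_def q).mpr hnd, hedge⟩
          have hlt := hσ u (SimpleGraph.Walk.cons h q) hcyc
          have hge : rho r (SimpleGraph.Walk.cons h q) ≤
              sigmaPlus a (SimpleGraph.Walk.cons h q) := by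
            unfold rho sigmaPlus
            rw [← SimpleGraph.Walk.map_snd_darts, List.map_map]
            exact List.sum_le_sum fun d hd => hor d hd
          have := le_max_left (sigmaPlus a (SimpleGraph.Walk.cons h q))
            (sigmaMinus a (SimpleGraph.Walk.cons h q))
          omega
      · -- some vertex `z` repeats in `q`: extract a strictly shorter closed walk
        obtain ⟨z, hz2⟩ : ∃ z, 2 ≤ q.support.count z := by
          by_contra hcon
          push_neg at hcon
          exact hnd (List.nodup_iff_count_le_one.mpr fun z => by
            have := hcon z; omega)
        have hz : z ∈ q.support := List.count_pos_iff.mp (by omega)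
        have hsplit : (q.takeUntil z hz).append (q.dropUntil z hz) = q :=
          q.take_spec hz
        have hcount1 : (q.takeUntil z hz).support.count z = 1 :=
          q.count_support_takeUntil_eq_one hz
        have hsupp : q.support =
            (q.takeUntil z hz).support ++ (q.dropUntil z hz).support.tail := by
          conv_lhs => rw [← hsplit]
          exact SimpleGraph.Walk.support_append _ _
        have hztail : z ∈ (q.dropUntil z hz).support.tail := by
          have : 2 ≤ ((q.takeUntil z hz).support ++
              (q.dropUntil z hz).support.tail).count z := by rw [← hsupp]; exact hz2
          rw [List.count_append] at this
          exact List.count_pos_iff.mp (by omega)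
        have hdnil : ¬ (q.dropUntil z hz).Nil := by
          intro hn
          rw [SimpleGraph.Walk.nil_iff_support_eq] at hn
          rw [hn] at hztail
          simp at hztail
        obtain ⟨w, h', rr, hdd⟩ := SimpleGraph.Walk.not_nil_iff.mp hdnil
        have hzr : z ∈ rr.support := by
          rw [hdd] at hztail
          simpa using hztail
        -- the shorter closed walk
        set c : G.Walk z z := SimpleGraph.Walk.cons h' (rr.takeUntil z hzr) with hc
        have hqdarts : q.darts =
            (q.takeUntil z hz).darts ++ (q.dropUntil z hz).darts := by
          conv_lhs => rw [← hsplit]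
          exact SimpleGraph.Walk.darts_append _ _
        have hrdarts : rr.darts =
            (rr.takeUntil z hzr).darts ++ (rr.dropUntil z hzr).darts := by
          conv_lhs => rw [← rr.take_spec hzr]
          exact SimpleGraph.Walk.darts_append _ _
        have hsub : ∀ d ∈ c.darts, d ∈ (SimpleGraph.Walk.cons h q).darts := by
          intro d hd
          rw [hc, SimpleGraph.Walk.darts_cons, List.mem_cons] at hd
          have hdin : d ∈ (q.dropUntil z hz).darts := by
            rw [hdd, SimpleGraph.Walk.darts_cons]
            rcases hd with rfl | hd
            · exact List.mem_cons_self
            · exact List.mem_cons_of_mem _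
                (hrdarts.symm ▸ List.mem_append_left _ hd)
          have hdq : d ∈ q.darts := hqdarts.symm ▸ List.mem_append_right _ hdin
          rw [SimpleGraph.Walk.darts_cons]
          exact List.mem_cons_of_mem _ hdq
        -- length bookkeeping
        have hlq : (q.takeUntil z hz).length + (q.dropUntil z hz).length = q.length := by
          have := congrArg SimpleGraph.Walk.length hsplit
          rwa [SimpleGraph.Walk.length_append] at this
        have hld : (q.dropUntil z hz).length = rr.length + 1 := by
          rw [hdd]; simp
        have hlr : (rr.takeUntil z hzr).length ≤ rr.length :=
          rr.length_takeUntil_le hzr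
        have hlc : c.length = (rr.takeUntil z hzr).length + 1 := by
          rw [hc]; simp
        have hlp : (SimpleGraph.Walk.cons h q).length = q.length + 1 := by simp
        have hclt : c.length < n := by omega
        exact ih c.length hclt c rfl (by omega) fun d hd => hor d (hsub d hd)

/-- If a bead configuration satisfies `σ(κ) < ρ(κ)` for every simple cycle `κ` of `G`,
then the orientation of `G` induced by the configuration is acyclic. -/
theorem sigma_lt_rho_induced_orientation_acyclic [Fintype V]
    (G : SimpleGraph V) (hG : G.Connected)
    (r : V → ℕ) (hr : ∀ v, 0 < r v)
    (a : V → V → ℕ) (hconf : IsBeadConfig G r a)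
    (hσ : ∀ (w : V) (κ : G.Walk w w), κ.IsCycle →
      max (sigmaPlus a κ) (sigmaMinus a κ) < rho r κ) :
    ∀ v, ¬ Relation.TransGen (inducedOrientation G r a) v v := by
  intro v hv
  -- build an oriented walk from the transitive chain
  have key : ∀ w, Relation.TransGen (inducedOrientation G r a) v w →
      ∃ p : G.Walk v w, 0 < p.length ∧
        ∀ d ∈ p.darts, r d.toProd.2 ≤ a d.toProd.2 d.toProd.1 := by
    intro w hw
    induction hw with
    | single hvw =>
      exact ⟨SimpleGraph.Walk.cons hvw.1 SimpleGraph.Walk.nil, by simp,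
        fun d hd => by
          simp only [SimpleGraph.Walk.darts_cons, SimpleGraph.Walk.darts_nil,
            List.mem_singleton] at hd
          subst hd
          exact hvw.2⟩
    | tail _ hbc ih =>
      obtain ⟨p, hp, hor⟩ := ih
      refine ⟨p.concat hbc.1, by simp, fun d hd => ?_⟩
      rw [SimpleGraph.Walk.darts_concat, List.concat_eq_append, List.mem_append] at hd
      rcases hd with hd | hd
      · exact hor d hd
      · rw [List.mem_singleton] at hd
        subst hd
        exact hbc.2
  obtain ⟨p, hp, hor⟩ := key v hv
  exact no_oriented_closed_walk hr hconf hσ p.length p rfl hp hor
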